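/- arXiv:1111.6085 — 2 statements merged into one kernel-verified Lean document; each statement's English description precedes it below -/
import Mathlib

section
/- For any x, y > 0 and any β ∈ ℝ, the β-divergence d_β(x|y) is nonnegative, and d_β(x|y) = 0 if and only if x = y. -/
noncomputable def betaDiv (β x y : ℝ) : ℝ :=
  if β = 0 then x / y - Real.log (x / y) - 1
  else if β = 1 then x * Real.log (x / y) - x + y
  else x ^ β / (β * (β - 1)) + y ^ β / β - x * y ^ (β - 1) / (β - 1)

open Real

/-- Strict two-point weighted AM-GM. -/
lemma amgm2_strict {a b w v : ℝ} (ha : 0 < a) (hb : 0 < b) (hab : a ≠ b)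
    (hw : 0 < w) (hv : 0 < v) (hwv : w + v = 1) :
    a ^ w * b ^ v < w * a + v * b := by
  have h := strictConcaveOn_log_Ioi.2 (Set.mem_Ioi.2 ha) (Set.mem_Ioi.2 hb) hab hw hv hwv
  simp only [smul_eq_mul] at h
  have hpos : 0 < w * a + v * b := by positivity
  calc a ^ w * b ^ v = Real.exp (w * Real.log a + v * Real.log b) := by
        rw [Real.rpow_def_of_pos ha, Real.rpow_def_of_pos hb, ← Real.exp_add]
        ring_nf
    _ < Real.exp (Real.log (w * a + v * b)) := Real.exp_lt_exp.2 h
    _ = w * a + v * b := Real.exp_log hpos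

/-- Strict Bernoulli for negative exponents. -/
lemma bernoulli_neg {β t : ℝ} (hβ : β < 0) (ht : 0 < t) (htne : t ≠ 1) :
    1 + β * (t - 1) < t ^ β := by
  have h1β : (0:ℝ) < 1 - β := by linarith
  have hab : t ^ β ≠ t := by
    intro h
    have hlt : Real.log (t ^ β) = Real.log t := by rw [h]
    rw [Real.log_rpow ht] at hlt
    have hlt' : (β - 1) * Real.log t = 0 := by linarith
    rcases mul_eq_zero.1 hlt' with h' | h'
    · linarith
    · rcases Real.log_eq_zero.1 h' with h'' | h'' | h''
      · exact absurd h'' ht.ne'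
      · exact htne h''
      · linarith
  have key := amgm2_strict (Real.rpow_pos_of_pos ht β) ht hab
      (show (0:ℝ) < 1 / (1 - β) from div_pos one_pos h1β)
      (show (0:ℝ) < -β / (1 - β) from div_pos (by linarith) h1β)
      (by rw [← add_div, show (1:ℝ) + -β = 1 - β from by ring]
          exact div_self h1β.ne')
  have hlhs : (t ^ β) ^ (1 / (1 - β)) * t ^ (-β / (1 - β)) = 1 := by
    rw [← Real.rpow_mul ht.le, ← Real.rpow_add ht,
      show β * (1 / (1 - β)) + -β / (1 - β) = 0 by field_simp; ring, Real.rpow_zero]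
  rw [hlhs] at key
  have h2 : (1 - β) * (1 / (1 - β) * t ^ β + -β / (1 - β) * t) = t ^ β - β * t := by
    field_simp; ring
  have h3 := mul_lt_mul_of_pos_left key h1β
  rw [h2, mul_one] at h3
  linarith

lemma key_pos {β t : ℝ} (hβ0 : β ≠ 0) (hβ1 : β ≠ 1) (ht : 0 < t) (htne : t ≠ 1) :
    0 < (t ^ β - 1 - β * (t - 1)) / (β * (β - 1)) := by
  have hs : (-1:ℝ) ≤ t - 1 := by linarith
  have hs' : t - 1 ≠ 0 := sub_ne_zero.2 htne
  rcases lt_trichotomy β 0 with h | h | h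
  · have hnum : 0 < t ^ β - 1 - β * (t - 1) := by
      have := bernoulli_neg h ht htne; linarith
    exact div_pos hnum (by nlinarith)
  · exact absurd h hβ0
  · rcases lt_trichotomy β 1 with h1 | h1 | h1
    · have := rpow_one_add_lt_one_add_mul_self hs hs' h h1
      rw [show (1:ℝ) + (t-1) = t by ring] at this
      apply div_pos_of_neg_of_neg <;> nlinarith
    · exact absurd h1 hβ1
    · have := one_add_mul_self_lt_rpow_one_add hs hs' h1
      rw [show (1:ℝ) + (t-1) = t by ring] at this
      exact div_pos (by nlinarith) (by nlinarith)

lemma betaDiv_self (β y : ℝ) (hy : 0 < y) : betaDiv β y y = 0 := by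
  unfold betaDiv
  split_ifs with h0 h1
  · rw [div_self hy.ne', Real.log_one]; ring
  · rw [div_self hy.ne', Real.log_one]; ring
  · have hyy : y * y ^ (β - 1) = y ^ β := by
      have h := Real.rpow_add hy 1 (β - 1)
      rw [show (1:ℝ) + (β - 1) = β from by ring, Real.rpow_one] at h
      exact h.symm
    rw [hyy]
    have hβ1 : β - 1 ≠ 0 := sub_ne_zero.2 h1
    field_simp
    ring

lemma betaDiv_pos {β x y : ℝ} (hx : 0 < x) (hy : 0 < y) (hxy : x ≠ y) :
    0 < betaDiv β x y := by
  have ht : 0 < x / y := div_pos hx hy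
  have htne : x / y ≠ 1 := fun h => hxy ((div_eq_one_iff_eq hy.ne').1 h)
  unfold betaDiv
  split_ifs with h0 h1
  · have := Real.log_lt_sub_one_of_pos ht htne; linarith
  · have h1t : (0:ℝ) < y / x := div_pos hy hx
    have h1tne : y / x ≠ 1 := fun h => hxy ((div_eq_one_iff_eq hx.ne').1 h).symm
    have hlog := Real.log_lt_sub_one_of_pos h1t h1tne
    rw [Real.log_div hy.ne' hx.ne'] at hlog
    rw [Real.log_div hx.ne' hy.ne']
    rw [show y / x - 1 = (y - x) / x by field_simp] at hlog
    have h2 := (lt_div_iff₀ hx).1 hlog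
    nlinarith
  · have key := key_pos h0 h1 ht htne
    have hxy' : x ^ β = y ^ β * (x / y) ^ β := by
      rw [← Real.mul_rpow hy.le (le_of_lt ht), mul_div_cancel₀ _ hy.ne']
    have hyb : y * y ^ (β - 1) = y ^ β := by
      have h := Real.rpow_add hy 1 (β - 1)
      rw [show (1:ℝ) + (β - 1) = β from by ring, Real.rpow_one] at h
      exact h.symm
    have hypb : 0 < y ^ β := Real.rpow_pos_of_pos hy β
    have expand : x ^ β / (β * (β - 1)) + y ^ β / β - x * y ^ (β - 1) / (β - 1)
        = y ^ β * (((x/y) ^ β - 1 - β * (x/y - 1)) / (β * (β - 1))) := by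
      have hβ1 : β - 1 ≠ 0 := sub_ne_zero.2 h1
      rw [hxy']
      rw [show x * y ^ (β - 1) = (x / y) * (y * y ^ (β - 1)) by field_simp, hyb]
      field_simp
      ring
    rw [expand]
    exact mul_pos hypb key

theorem betaDiv_nonneg_eq_zero_iff (β x y : ℝ) (hx : 0 < x) (hy : 0 < y) :
    0 ≤ betaDiv β x y ∧ (betaDiv β x y = 0 ↔ x = y) := by
  by_cases hxy : x = y
  · subst hxy
    simp [betaDiv_self β x hx]
  · have h := betaDiv_pos (β := β) hx hy hxy
    exact ⟨h.le, ⟨fun h0 => absurd h0.symm h.ne, fun h0 => absurd h0 hxy⟩⟩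
end

section
/- For fixed x > 0, the map y ↦ d_β(x|y) on y > 0 is convex when 1 ≤ β ≤ 2, and can be written as the sum of a convex function of y and a concave function of y for any β ∈ ℝ: specifically, for β < 1, y ↦ −x·y^(β−1)/(β−1) is convex and y ↦ y^β/β is concave on (0,∞). -/
lemma hasDerivAt_cpow (c p : ℝ) {y : ℝ} (hy : 0 < y) :
    HasDerivAt (fun z : ℝ => c * z ^ p) (c * (p * y ^ (p - 1))) y :=
  (Real.hasDerivAt_rpow_const (Or.inl hy.ne')).const_mul c

lemma deriv_cpow (c p : ℝ) {y : ℝ} (hy : 0 < y) :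
    deriv (fun z : ℝ => c * z ^ p) y = c * (p * y ^ (p - 1)) :=
  (hasDerivAt_cpow c p hy).deriv

lemma convexOn_cpow (c p : ℝ) (h : 0 ≤ c * p * (p - 1)) :
    ConvexOn ℝ (Set.Ioi (0:ℝ)) (fun y : ℝ => c * y ^ p) := by
  have hderiv : ∀ y ∈ Set.Ioi (0:ℝ),
      deriv (fun z : ℝ => c * z ^ p) y = (c * p) * y ^ (p - 1) := by
    intro y hy
    rw [deriv_cpow c p hy]; ring
  refine convexOn_of_deriv2_nonneg (convex_Ioi 0) ?_ ?_ ?_ ?_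
  · intro y hy
    exact (hasDerivAt_cpow c p hy).continuousAt.continuousWithinAt
  · intro y hy
    rw [interior_Ioi] at hy
    exact (hasDerivAt_cpow c p hy).differentiableAt.differentiableWithinAt
  · intro y hy
    rw [interior_Ioi] at hy
    have heq : deriv (fun z : ℝ => c * z ^ p) =ᶠ[nhds y]
        (fun z : ℝ => (c * p) * z ^ (p - 1)) :=
      Filter.eventuallyEq_of_mem (Ioi_mem_nhds hy) hderiv
    exact ((hasDerivAt_cpow (c * p) (p - 1) hy).differentiableAt.congr_of_eventuallyEq
      heq).differentiableWithinAt
  · intro y hy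
    rw [interior_Ioi] at hy
    have heq : deriv (fun z : ℝ => c * z ^ p) =ᶠ[nhds y]
        (fun z : ℝ => (c * p) * z ^ (p - 1)) :=
      Filter.eventuallyEq_of_mem (Ioi_mem_nhds hy) hderiv
    have : deriv^[2] (fun z : ℝ => c * z ^ p) y
        = (c * p) * ((p - 1) * y ^ (p - 1 - 1)) := by
      simp only [Function.iterate_succ, Function.iterate_zero, Function.comp_apply, id]
      rw [heq.deriv_eq, deriv_cpow (c * p) (p - 1) hy]
    rw [this]
    have hpow : (0:ℝ) ≤ y ^ (p - 1 - 1) := (Real.rpow_pos_of_pos hy _).le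
    nlinarith [mul_nonneg h hpow]

lemma concaveOn_cpow (c p : ℝ) (h : c * p * (p - 1) ≤ 0) :
    ConcaveOn ℝ (Set.Ioi (0:ℝ)) (fun y : ℝ => c * y ^ p) := by
  have := (convexOn_cpow (-c) p (by nlinarith)).neg
  convert this using 2 with y
  · rfl
  · rfl
  · simp

lemma convexOn_congr' {s : Set ℝ} {f g : ℝ → ℝ} (hf : ConvexOn ℝ s f)
    (h : ∀ y ∈ s, f y = g y) : ConvexOn ℝ s g := by
  refine ⟨hf.1, fun a ha b hb u v hu hv huv => ?_⟩
  rw [← h a ha, ← h b hb, ← h _ (hf.1 ha hb hu hv huv)]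
  exact hf.2 ha hb hu hv huv

theorem betaDiv_convexity (β x : ℝ) (hx : 0 < x) :
    (1 ≤ β → β ≤ 2 → ConvexOn ℝ (Set.Ioi (0:ℝ)) (fun y => betaDiv β x y)) ∧
    (β < 1 →
      ConvexOn ℝ (Set.Ioi (0:ℝ)) (fun y : ℝ => -(x * y ^ (β - 1)) / (β - 1)) ∧
      ConcaveOn ℝ (Set.Ioi (0:ℝ))
        (fun y : ℝ => if β = 0 then Real.log y else y ^ β / β)) := by
  constructor
  · intro h1 h2
    by_cases hb1 : β = 1
    · subst hb1
      -- f y = x * log(x/y) - x + y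
      have hlog : ConvexOn ℝ (Set.Ioi (0:ℝ)) (fun y : ℝ => -x * Real.log y) := by
        have := (strictConcaveOn_log_Ioi.concaveOn.neg).smul hx.le
        convert this using 2 with y
        · rfl
        · rfl
        · rfl
        · rfl
        · simp [smul_eq_mul]
      have hsum := (hlog.add (convexOn_id (convex_Ioi 0))).add_const (x * Real.log x - x)
      refine convexOn_congr' hsum fun y hy => ?_
      have hy : (0:ℝ) < y := hy
      simp only [betaDiv, one_ne_zero, if_false, if_pos rfl, Pi.add_apply, id]
      rw [Real.log_div hx.ne' hy.ne']
      simp; ring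
    · have hb : 1 < β := lt_of_le_of_ne h1 (Ne.symm hb1)
      have hb0 : β ≠ 0 := by linarith
      have hne1 : β - 1 ≠ 0 := by intro h; apply hb1; linarith
      have c1 : ConvexOn ℝ (Set.Ioi (0:ℝ)) (fun y : ℝ => (1 / β) * y ^ β) := by
        apply convexOn_cpow
        have : (1 / β) * β = 1 := by field_simp
        nlinarith
      have c2 : ConvexOn ℝ (Set.Ioi (0:ℝ)) (fun y : ℝ => (-(x / (β - 1))) * y ^ (β - 1)) := by
        apply convexOn_cpow
        have : (-(x / (β - 1))) * (β - 1) = -x := by field_simp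
        nlinarith
      have hsum := (c1.add c2).add_const (x ^ β / (β * (β - 1)))
      refine convexOn_congr' hsum fun y hy => ?_
      simp only [betaDiv, if_neg hb0, if_neg hb1, Pi.add_apply]
      field_simp
      ring
  · intro hb
    have hne1 : β - 1 ≠ 0 := by intro h; linarith
    constructor
    · have c2 : ConvexOn ℝ (Set.Ioi (0:ℝ)) (fun y : ℝ => (-(x / (β - 1))) * y ^ (β - 1)) := by
        apply convexOn_cpow
        have : (-(x / (β - 1))) * (β - 1) = -x := by field_simp
        nlinarith
      refine convexOn_congr' c2 fun y hy => ?_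
      field_simp
    · by_cases hb0 : β = 0
      · subst hb0
        simp only [if_pos rfl]
        exact strictConcaveOn_log_Ioi.concaveOn
      · have c1 : ConcaveOn ℝ (Set.Ioi (0:ℝ)) (fun y : ℝ => (1 / β) * y ^ β) := by
          apply concaveOn_cpow
          have : (1 / β) * β = 1 := by field_simp
          nlinarith
        have : ConcaveOn ℝ (Set.Ioi (0:ℝ)) (fun y : ℝ => y ^ β / β) := by
          convert c1 using 2 with y
          ring
        simpa [if_neg hb0] using this
end
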